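/- Let n ≥ 2, K ≥ 1 and let A be an invertible n×n real matrix with det A > 0. If ‖A‖ⁿ ≤ K · det A, where ‖A‖ denotes the operator norm of A on Euclidean ℝⁿ, then ‖A⁻¹‖ⁿ ≤ K^{n−1} · det(A⁻¹). (Consequently, if a differentiable homeomorphism satisfies the distortion inequality |Df(x)|ⁿ ≤ K J(x,f) at points of nonsingular differential, then its inverse satisfies |Dg(y)|ⁿ ≤ K^{n−1} J(y,g).) -/

import Mathlib

open MeasureTheory Set Metric Filter Topology
open scoped ENNReal NNReal InnerProductSpace

noncomputable section

/-- Euclidean `n`-space `ℝⁿ`. -/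
abbrev En (n : ℕ) : Type := EuclideanSpace ℝ (Fin n)

/-- The length (arclength) of a curve `γ : [0,1] → ℝⁿ`, i.e. its total variation on `[0,1]`. -/
def curveLength {n : ℕ} (γ : ℝ → En n) : ℝ≥0∞ := eVariationOn γ (Set.Icc 0 1)

/-- A curve is rectifiable if it has finite length. -/
def Rectifiable {n : ℕ} (γ : ℝ → En n) : Prop := curveLength γ < ⊤

/-- The arclength function `t ↦ length of γ on [0,t]`. -/
def arcFn {n : ℕ} (γ : ℝ → En n) (t : ℝ) : ℝ := (eVariationOn γ (Set.Icc 0 t)).toReal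

/-- The line integral `∫_γ ρ ds` of a nonnegative Borel function with respect to arclength,
defined through the unit-speed (arclength) reparametrisation of `γ`:  if `σ` is `1`-Lipschitz
and satisfies `σ (arcFn γ t) = γ t` on `[0,1]`, then `σ` restricted to `[0, length γ]` is the
arclength parametrisation of `γ` and `∫_γ ρ ds = ∫_{[0, length γ]} ρ(σ(u)) du`. -/
def curveIntegralArc {n : ℕ} (ρ : En n → ℝ≥0∞) (γ : ℝ → En n) : ℝ≥0∞ :=
  ⨆ (σ : ℝ → En n) (_ : LipschitzWith 1 σ ∧ ∀ t ∈ Set.Icc (0:ℝ) 1, σ (arcFn γ t) = γ t),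
    ∫⁻ u in Set.Icc (0:ℝ) (arcFn γ 1), ρ (σ u)

/-- A nonnegative Borel function `ρ` is admissible for the curve family `Γ` if
`∫_γ ρ ds ≥ 1` for every rectifiable `γ ∈ Γ`. -/
def IsAdmissible {n : ℕ} (Γ : Set (ℝ → En n)) (ρ : En n → ℝ≥0∞) : Prop :=
  Measurable ρ ∧ ∀ γ ∈ Γ, Rectifiable γ → 1 ≤ curveIntegralArc ρ γ

/-- The conformal modulus `M(Γ)` of a family of curves in `ℝⁿ`. -/
def modulus {n : ℕ} (Γ : Set (ℝ → En n)) : ℝ≥0∞ :=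
  ⨅ (ρ : En n → ℝ≥0∞) (_ : IsAdmissible Γ ρ), ∫⁻ x, ρ x ^ n

/-- A curve (continuous map of `[0,1]`) lying in the set `Ω`. -/
def IsCurveIn {n : ℕ} (Ω : Set (En n)) (γ : ℝ → En n) : Prop :=
  ContinuousOn γ (Set.Icc 0 1) ∧ ∀ t ∈ Set.Icc (0:ℝ) 1, γ t ∈ Ω

/-- The image curve family `fΓ = {f ∘ γ : γ ∈ Γ}`. -/
def imageFam {n : ℕ} (f : En n → En n) (Γ : Set (ℝ → En n)) : Set (ℝ → En n) :=
  (fun γ => f ∘ γ) '' Γ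

/-- A domain: a nonempty open connected set. -/
def IsDomainSet {n : ℕ} (Ω : Set (En n)) : Prop := IsOpen Ω ∧ IsConnected Ω

/-- `f` is a homeomorphism of `Ω` onto `Ω'`. -/
def HomeoOn {n : ℕ} (f : En n → En n) (Ω Ω' : Set (En n)) : Prop :=
  Set.BijOn f Ω Ω' ∧ ContinuousOn f Ω ∧
    ∃ g : En n → En n, ContinuousOn g Ω' ∧ (∀ x ∈ Ω, g (f x) = x) ∧ ∀ y ∈ Ω', f (g y) = y

/-- `f` is a `K`-quasiconformal homeomorphism of `Ω` onto `Ω'`:  it is a homeomorphism and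
`(1/K) M(Γ) ≤ M(fΓ) ≤ K M(Γ)` for every family `Γ` of curves in `Ω`. -/
def IsQC {n : ℕ} (K : ℝ) (f : En n → En n) (Ω Ω' : Set (En n)) : Prop :=
  HomeoOn f Ω Ω' ∧
  ∀ Γ : Set (ℝ → En n), (∀ γ ∈ Γ, IsCurveIn Ω γ) →
    modulus Γ ≤ ENNReal.ofReal K * modulus (imageFam f Γ) ∧
    modulus (imageFam f Γ) ≤ ENNReal.ofReal K * modulus Γ

/-- `Δ(E,F;G)`: the family of all curves `γ : [0,1] → ℝⁿ` with `γ(0) ∈ E`, `γ(1) ∈ F`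
and `γ(t) ∈ G` for `0 < t < 1`. -/
def curvesJoining {n : ℕ} (E F G : Set (En n)) : Set (ℝ → En n) :=
  {γ | ContinuousOn γ (Set.Icc 0 1) ∧ γ 0 ∈ E ∧ γ 1 ∈ F ∧ ∀ t ∈ Set.Ioo (0:ℝ) 1, γ t ∈ G}

/-- `ω_{n-1}`, the surface area of the unit sphere `S^{n-1} ⊂ ℝⁿ`
(equal to `n` times the volume of the unit ball). -/
def unitSphereArea (n : ℕ) : ℝ := n * (volume (Metric.ball (0 : En n) 1)).toReal

/-- The first standard basis vector `e₁` of `ℝⁿ`. -/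
def e1 (n : ℕ) : En n := (WithLp.equiv 2 (Fin n → ℝ)).symm (fun i => if i.val = 0 then 1 else 0)

/-- The Grötzsch capacity `γ_n(t) = M(Δ(B̄ⁿ, {s e₁ : s ≥ t}; ℝⁿ))`. -/
def grotzschCap (n : ℕ) (t : ℝ) : ℝ≥0∞ :=
  modulus (curvesJoining (Metric.closedBall (0 : En n) 1)
    {x : En n | ∃ s : ℝ, t ≤ s ∧ x = s • e1 n} Set.univ)

/-- The Teichmüller capacity `τ_n(t) = M(Δ([-e₁,0], {s e₁ : s ≥ t}; ℝⁿ))`. -/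
def teichCap (n : ℕ) (t : ℝ) : ℝ≥0∞ :=
  modulus (curvesJoining (segment ℝ (-(e1 n)) (0 : En n))
    {x : En n | ∃ s : ℝ, t ≤ s ∧ x = s • e1 n} Set.univ)

/-- The modulus `Mod(R(E,F;G)) = (ω_{n-1} / M(Δ(E,F;G)))^{1/(n-1)}` of a ring. -/
def ringMod {n : ℕ} (E F G : Set (En n)) : ℝ≥0∞ :=
  (ENNReal.ofReal (unitSphereArea n) / modulus (curvesJoining E F G)) ^ ((1:ℝ) / ((n:ℝ) - 1))

end

/-- Rayleigh-quotient bound for a selfadjoint operator with a known orthonormal eigenbasis. -/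
private lemma aux_rayleigh_le {n : ℕ} (L : EuclideanSpace ℝ (Fin n) →L[ℝ] EuclideanSpace ℝ (Fin n))
    (hL : IsSelfAdjoint L) (b : OrthonormalBasis (Fin n) ℝ (EuclideanSpace ℝ (Fin n)))
    (μ : Fin n → ℝ) (hb : ∀ j, L (b j) = μ j • b j) (c : ℝ) (hc : ∀ j, μ j ≤ c)
    (x : EuclideanSpace ℝ (Fin n)) :
    ⟪x, L x⟫_ℝ ≤ c * ‖x‖ ^ 2 := by
  have hrep : ∀ i, b.repr (L x) i = μ i * b.repr x i := by
    intro i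
    rw [b.repr_apply_apply, b.repr_apply_apply]
    calc ⟪b i, L x⟫_ℝ = ⟪L (b i), x⟫_ℝ := by
          conv_lhs => rw [← hL, ContinuousLinearMap.star_eq_adjoint,
            ContinuousLinearMap.adjoint_inner_right]
      _ = μ i * ⟪b i, x⟫_ℝ := by rw [hb, real_inner_smul_left]
  have h1 : ⟪x, L x⟫_ℝ = ∑ i, b.repr x i * (μ i * b.repr x i) := by
    rw [← b.repr.inner_map_map x (L x), PiLp.inner_apply]
    simp [hrep, RCLike.inner_apply]
    exact Finset.sum_congr rfl (fun i _ => by ring)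
  have h2 : ‖x‖ ^ 2 = ∑ i, b.repr x i ^ 2 := by
    rw [← b.repr.norm_map x, EuclideanSpace.norm_eq, Real.sq_sqrt (by positivity)]
    simp [sq_abs]
  rw [h1, h2, Finset.mul_sum]
  apply Finset.sum_le_sum
  intro i _
  have h3 : b.repr x i * (μ i * b.repr x i) = μ i * b.repr x i ^ 2 := by ring
  rw [h3]
  exact mul_le_mul_of_nonneg_right (hc i) (sq_nonneg _)

set_option maxHeartbeats 1000000 in
/-- if an invertible `n×n` real matrix `A` with `det A > 0` satisfies
`‖A‖ⁿ ≤ K det A` (operator norm on Euclidean `ℝⁿ`), then `‖A⁻¹‖ⁿ ≤ K^{n-1} det (A⁻¹)`. -/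
theorem inverse_distortion_inequality (n : ℕ) (hn : 2 ≤ n) (K : ℝ) (hK : 1 ≤ K)
    (A : Matrix (Fin n) (Fin n) ℝ) (hA : IsUnit A) (hdet : 0 < A.det)
    (h : ‖(Matrix.toEuclideanCLM (𝕜 := ℝ) A : En n →L[ℝ] En n)‖ ^ n ≤ K * A.det) :
    ‖(Matrix.toEuclideanCLM (𝕜 := ℝ) A⁻¹ : En n →L[ℝ] En n)‖ ^ n ≤
      K ^ (n - 1) * (A⁻¹).det := by
  classical
  obtain ⟨m, rfl⟩ : ∃ m, n = m + 1 := ⟨n - 1, by omega⟩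
  set LA := (Matrix.toEuclideanCLM (𝕜 := ℝ) A : En (m+1) →L[ℝ] En (m+1)) with hLA_def
  set LB := (Matrix.toEuclideanCLM (𝕜 := ℝ) A⁻¹ : En (m+1) →L[ℝ] En (m+1)) with hLB_def
  have hdet' : A.det ≠ 0 := ne_of_gt hdet
  have hAB : A * A⁻¹ = 1 := Matrix.mul_nonsing_inv A (isUnit_iff_ne_zero.mpr hdet')
  have hdetinv : (A⁻¹).det = (A.det)⁻¹ := by
    rw [Matrix.det_nonsing_inv, Ring.inverse_eq_inv]
  have hid : ∀ x : En (m+1), LA (LB x) = x := by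
    intro x
    rw [hLA_def, hLB_def, ← ContinuousLinearMap.mul_apply, ← map_mul, hAB, map_one,
      ContinuousLinearMap.one_apply]
  set T : Matrix (Fin (m+1)) (Fin (m+1)) ℝ := (A⁻¹).conjTranspose * A⁻¹ with hT_def
  have hT : T.IsHermitian := (Matrix.posSemidef_conjTranspose_mul_self A⁻¹).1
  set b := hT.eigenvectorBasis with hb_def
  set μ := hT.eigenvalues with hμ_def
  set LT := (Matrix.toEuclideanCLM (𝕜 := ℝ) T : En (m+1) →L[ℝ] En (m+1)) with hLT_def
  have h1 : ∀ x : En (m+1), ‖LB x‖ ^ 2 = ⟪x, LT x⟫_ℝ := by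
    intro x
    rw [hLT_def, hT_def, ← Matrix.star_eq_conjTranspose, map_mul, map_star, ← hLB_def,
      ContinuousLinearMap.mul_apply, ContinuousLinearMap.star_eq_adjoint,
      ContinuousLinearMap.adjoint_inner_right, real_inner_self_eq_norm_sq]
  have h2 : ∀ j, LT (b j) = μ j • b j := by
    intro j
    apply (WithLp.equiv 2 (Fin (m+1) → ℝ)).injective
    rw [hLT_def]
    change Matrix.mulVec T (WithLp.ofLp (b j)) = _
    simpa using hT.mulVec_eigenvectorBasis j
  have hbnorm : ∀ j, ‖b j‖ = 1 := fun j => b.orthonormal.1 j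
  have h3 : ∀ j, ‖LB (b j)‖ ^ 2 = μ j := by
    intro j
    rw [h1, h2, real_inner_smul_right, real_inner_self_eq_norm_sq, hbnorm]
    ring
  have h6 : ∀ j, 1 ≤ ‖LA‖ * ‖LB (b j)‖ := by
    intro j
    calc (1:ℝ) = ‖b j‖ := (hbnorm j).symm
      _ = ‖LA (LB (b j))‖ := by rw [hid]
      _ ≤ ‖LA‖ * ‖LB (b j)‖ := LA.le_opNorm _
  have hLApos : 0 < ‖LA‖ := by
    have h60 := h6 0
    nlinarith [norm_nonneg (LB (b 0)), norm_nonneg LA]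
  have hμlb : ∀ j, (‖LA‖ ^ 2)⁻¹ ≤ μ j := by
    intro j
    have h60 := h6 j
    have h30 := h3 j
    have hsq : 1 ≤ ‖LA‖ ^ 2 * μ j := by
      nlinarith [norm_nonneg (LB (b j)), norm_nonneg LA]
    rw [inv_eq_one_div, div_le_iff₀ (by positivity)]
    linarith
  have hμpos : ∀ j, 0 < μ j := fun j => lt_of_lt_of_le (by positivity) (hμlb j)
  have hdetT : ∏ j, μ j = (A.det ^ 2)⁻¹ := by
    have hd := hT.det_eq_prod_eigenvalues
    have hdT : T.det = (A.det ^ 2)⁻¹ := by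
      rw [hT_def, Matrix.det_mul, Matrix.det_conjTranspose, hdetinv]
      simp only [star_trivial]
      rw [← mul_inv, ← sq]
    rw [← hdT, hd]
    norm_cast
  obtain ⟨k, -, hk⟩ := Finset.exists_max_image (Finset.univ : Finset (Fin (m+1))) μ
    ⟨0, Finset.mem_univ _⟩
  have hsa : IsSelfAdjoint LT := by
    rw [IsSelfAdjoint, hLT_def, ← map_star, Matrix.star_eq_conjTranspose, hT]
  have hb2 : ∀ x : En (m+1), ‖LB x‖ ^ 2 ≤ μ k * ‖x‖ ^ 2 := by
    intro x
    rw [h1]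
    exact aux_rayleigh_le LT hsa b μ h2 (μ k) (fun j => hk j (Finset.mem_univ j)) x
  have hBle : ‖LB‖ ≤ Real.sqrt (μ k) := by
    apply ContinuousLinearMap.opNorm_le_bound _ (Real.sqrt_nonneg _)
    intro x
    rw [show ‖LB x‖ = Real.sqrt (‖LB x‖ ^ 2) from (Real.sqrt_sq (norm_nonneg _)).symm]
    calc Real.sqrt (‖LB x‖ ^ 2) ≤ Real.sqrt (μ k * ‖x‖ ^ 2) := Real.sqrt_le_sqrt (hb2 x)
      _ = Real.sqrt (μ k) * ‖x‖ := by
          rw [Real.sqrt_mul (le_of_lt (hμpos k)), Real.sqrt_sq (norm_nonneg x)]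
  have hB2 : ‖LB‖ ^ 2 ≤ μ k := by
    have := pow_le_pow_left₀ (norm_nonneg LB) hBle 2
    rwa [Real.sq_sqrt (le_of_lt (hμpos k))] at this
  have hprod : μ k * ∏ i ∈ Finset.univ.erase k, μ i = (A.det ^ 2)⁻¹ := by
    rw [Finset.mul_prod_erase _ _ (Finset.mem_univ k), hdetT]
  have hPpos : 0 < ∏ i ∈ Finset.univ.erase k, μ i :=
    Finset.prod_pos (fun i _ => hμpos i)
  have herase : ((‖LA‖ ^ 2)⁻¹) ^ m ≤ ∏ i ∈ Finset.univ.erase k, μ i := by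
    have hcard : (Finset.univ.erase k).card = m := by
      rw [Finset.card_erase_of_mem (Finset.mem_univ k), Finset.card_univ, Fintype.card_fin]
      omega
    calc ((‖LA‖ ^ 2)⁻¹) ^ m = ∏ _i ∈ Finset.univ.erase k, (‖LA‖ ^ 2)⁻¹ := by
          rw [Finset.prod_const, hcard]
      _ ≤ ∏ i ∈ Finset.univ.erase k, μ i :=
          Finset.prod_le_prod (fun i _ => by positivity) (fun i _ => hμlb i)
  have key1 : ‖LB‖ ^ 2 * A.det ^ 2 ≤ ‖LA‖ ^ (2 * m) := by
    have e1 : ‖LB‖ ^ 2 * ∏ i ∈ Finset.univ.erase k, μ i ≤ (A.det ^ 2)⁻¹ := by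
      rw [← hprod]
      exact mul_le_mul_of_nonneg_right hB2 (le_of_lt hPpos)
    have e2 : ‖LB‖ ^ 2 * ((‖LA‖ ^ 2)⁻¹) ^ m ≤ (A.det ^ 2)⁻¹ :=
      le_trans (mul_le_mul_of_nonneg_left herase (by positivity)) e1
    rw [← inv_pow, ← pow_mul, inv_pow] at e2
    have hmpos : (0:ℝ) < ‖LA‖ ^ (2 * m) := pow_pos hLApos _
    rw [← div_eq_mul_inv, ← one_div] at e2
    have e3 := (div_le_div_iff₀ hmpos (pow_pos hdet 2)).mp e2
    linarith
  have hLAn : (‖LA‖ ^ (m+1)) ^ m ≤ (K * A.det) ^ m :=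
    pow_le_pow_left₀ (by positivity) h m
  have key2 : (‖LB‖ ^ (m+1) * A.det) ^ 2 ≤ (K ^ m) ^ 2 := by
    have hK1 : (‖LB‖ ^ 2 * A.det ^ 2) ^ (m+1) ≤ (‖LA‖ ^ (2 * m)) ^ (m+1) :=
      pow_le_pow_left₀ (by positivity) key1 (m+1)
    have e3 : (‖LB‖ ^ (m+1) * A.det) ^ 2 * (A.det ^ 2) ^ m ≤ ((‖LA‖ ^ (m+1)) ^ m) ^ 2 := by
      calc (‖LB‖ ^ (m+1) * A.det) ^ 2 * (A.det ^ 2) ^ m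
          = (‖LB‖ ^ 2 * A.det ^ 2) ^ (m+1) := by ring
        _ ≤ (‖LA‖ ^ (2 * m)) ^ (m+1) := hK1
        _ = ((‖LA‖ ^ (m+1)) ^ m) ^ 2 := by ring
    have e4 : ((‖LA‖ ^ (m+1)) ^ m) ^ 2 ≤ (K ^ m) ^ 2 * (A.det ^ 2) ^ m := by
      calc ((‖LA‖ ^ (m+1)) ^ m) ^ 2 ≤ ((K * A.det) ^ m) ^ 2 :=
            pow_le_pow_left₀ (by positivity) hLAn 2
        _ = (K ^ m) ^ 2 * (A.det ^ 2) ^ m := by ring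
    have e5 : (‖LB‖ ^ (m+1) * A.det) ^ 2 * (A.det ^ 2) ^ m ≤
        (K ^ m) ^ 2 * (A.det ^ 2) ^ m := le_trans e3 e4
    exact le_of_mul_le_mul_right e5 (pow_pos (pow_pos hdet 2) m)
  have final : ‖LB‖ ^ (m+1) * A.det ≤ K ^ m :=
    le_of_pow_le_pow_left₀ two_ne_zero (by positivity) key2
  simp only [Nat.add_sub_cancel]
  rw [hdetinv, ← div_eq_mul_inv, le_div_iff₀ hdet]
  exact final
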